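/- arXiv:1011.2873 — 2 statements merged into one kernel-verified Lean document; each statement's English description precedes it below -/
import Mathlib

section
/- Let $n \ge 2$ be even. Consider the set of positive roots $\alpha_{ab}$, $1 \le a < b \le n+1$, of $\mathfrak{su}(n+1)$, where in coordinates $\alpha_{ab} = e_a - e_b \in \mathbb{R}^{n+1}$ (standard basis vectors). Then there exists a choice of signs $\epsilon_{ab} \in \{+1, -1\}$ such that $\sum_{1 \le a < b \le n+1} \epsilon_{ab}\, \alpha_{ab} = 0$. -/
open scoped BigOperators

lemma aux_sum (m c : ℕ) (hc : c < m) (hm : Odd m) :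
    ∑ i ∈ Finset.range m, (if c < i then (-1:ℝ)^i else 0)
      = ∑ i ∈ Finset.range m, (if i < c then (-1:ℝ)^i else 0) := by
  have hR : ∑ i ∈ Finset.range m, (if i < c then (-1:ℝ)^i else 0)
      = ∑ i ∈ Finset.range c, (-1:ℝ)^i := by
    rw [← Finset.sum_filter]
    congr 1
    ext i
    simp only [Finset.mem_filter, Finset.mem_range]
    omega
  have hL : ∑ i ∈ Finset.range m, (if c < i then (-1:ℝ)^i else 0)
      = ∑ i ∈ Finset.Ico (c+1) m, (-1:ℝ)^i := by
    rw [← Finset.sum_filter]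
    congr 1
    ext i
    simp only [Finset.mem_filter, Finset.mem_range, Finset.mem_Ico]
    omega
  have hsplit : ∑ i ∈ Finset.range (c+1), (-1:ℝ)^i + ∑ i ∈ Finset.Ico (c+1) m, (-1:ℝ)^i
      = ∑ i ∈ Finset.range m, (-1:ℝ)^i :=
    Finset.sum_range_add_sum_Ico _ (by omega)
  have hEnd : ∑ i ∈ Finset.Ico (c+1) m, (-1:ℝ)^i
      = ∑ i ∈ Finset.range m, (-1:ℝ)^i - ∑ i ∈ Finset.range (c+1), (-1:ℝ)^i := by
    linarith [hsplit]
  rw [hL, hR, hEnd, Finset.sum_range_succ, neg_one_geom_sum, neg_one_geom_sum,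
    if_neg (by simpa using hm)]
  rcases Nat.even_or_odd c with h | h
  · rw [if_pos h, h.neg_one_pow]; ring
  · rw [if_neg (by simpa using h), h.neg_one_pow]; ring

lemma aux_sum' (m c : ℕ) (hc : c < m) (hm : Odd m) :
    ∑ i ∈ Finset.range m, (if c < i then (-1:ℝ)^(c + i) else 0)
      = ∑ i ∈ Finset.range m, (if i < c then (-1:ℝ)^(i + c) else 0) := by
  have h1 : ∀ i, (if c < i then (-1:ℝ)^(c + i) else 0)
      = (-1:ℝ)^c * (if c < i then (-1:ℝ)^i else 0) := by
    intro i; rw [mul_ite, mul_zero, ← pow_add]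
  have h2 : ∀ i, (if i < c then (-1:ℝ)^(i + c) else 0)
      = (-1:ℝ)^c * (if i < c then (-1:ℝ)^i else 0) := by
    intro i; rw [mul_ite, mul_zero, ← pow_add, Nat.add_comm]
  simp only [h1, h2, ← Finset.mul_sum, aux_sum m c hc hm]

/-- for even `n ≥ 2`, there is a choice of signs
`ε_{ab} ∈ {±1}` such that `∑_{1 ≤ a < b ≤ n+1} ε_{ab} (e_a - e_b) = 0`
for the positive roots `α_{ab} = e_a - e_b` of `su(n+1)` in `ℝ^{n+1}`. -/
theorem exists_signs_summing_roots_to_zero_of_even (n : ℕ) (hn : 2 ≤ n)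
    (heven : Even n) :
    ∃ ε : Fin (n + 1) → Fin (n + 1) → ℝ,
      (∀ a b : Fin (n + 1), ε a b = 1 ∨ ε a b = -1) ∧
      (∑ a : Fin (n + 1), ∑ b : Fin (n + 1),
        if a < b then
          ε a b • ((Pi.single a 1 - Pi.single b 1 : Fin (n + 1) → ℝ)) else 0) = 0 := by
  refine ⟨fun a b => (-1 : ℝ) ^ ((a : ℕ) + b), fun a b => ?_, ?_⟩
  · rcases Nat.even_or_odd ((a : ℕ) + b) with h | h
    · exact Or.inl h.neg_one_pow
    · exact Or.inr h.neg_one_pow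
  · funext c
    simp only [Finset.sum_apply, Pi.zero_apply, Pi.smul_apply, Pi.sub_apply,
      Pi.single_apply, smul_eq_mul, apply_ite (fun v : Fin (n+1) → ℝ => v c)]
    have key : ∀ a b : Fin (n+1),
        (if a < b then (-1:ℝ)^((a:ℕ)+b) * ((if c = a then 1 else 0) - (if c = b then 1 else 0)) else 0)
        = (if c = a then (if a < b then (-1:ℝ)^((a:ℕ)+b) else 0) else 0)
          - (if c = b then (if a < b then (-1:ℝ)^((a:ℕ)+b) else 0) else 0) := by
      intro a b
      rcases eq_or_ne c a with h1 | h1 <;> rcases eq_or_ne c b with h2 | h2 <;>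
        by_cases hab : a < b <;>
        simp_all [ne_of_lt, ne_of_gt] <;> rw [if_neg (not_lt.mpr hab)] <;> simp [hab]
    have e1 : ∀ a : Fin (n+1),
        (∑ b : Fin (n+1), if c = a then (if a < b then (-1:ℝ)^((a:ℕ)+b) else 0) else 0)
        = if c = a then (∑ b : Fin (n+1), if a < b then (-1:ℝ)^((a:ℕ)+b) else 0) else 0 := by
      intro a; split <;> simp
    simp only [key, Finset.sum_sub_distrib, e1, Finset.sum_ite_eq, Finset.mem_univ, if_true]
    rw [sub_eq_zero]
    have hL : ∑ b : Fin (n+1), (if c < b then (-1:ℝ)^((c:ℕ)+b) else 0)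
        = ∑ i ∈ Finset.range (n+1), (if (c:ℕ) < i then (-1:ℝ)^((c:ℕ)+i) else 0) := by
      rw [← Fin.sum_univ_eq_sum_range]
      exact Finset.sum_congr rfl (fun b _ => by simp only [Fin.lt_def])
    have hR : ∑ a : Fin (n+1), (if a < c then (-1:ℝ)^((a:ℕ)+c) else 0)
        = ∑ i ∈ Finset.range (n+1), (if i < (c:ℕ) then (-1:ℝ)^(i+(c:ℕ)) else 0) := by
      rw [← Fin.sum_univ_eq_sum_range]
      exact Finset.sum_congr rfl (fun a _ => by simp only [Fin.lt_def])
    rw [hL, hR]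
    exact aux_sum' (n+1) c c.isLt (heven.add_one)
end

section
/- Let $\mathfrak{g} = \mathfrak{k} \oplus \mathfrak{m}$ be a reductive decomposition with $[\mathfrak{k},\mathfrak{k}] \subset \mathfrak{k}$ a proper subalgebra of lower rank, realized via a common root space decomposition: $\mathfrak{m} \otimes \mathbb{C} = \mathrm{span}\{H_1,\dots,H_p\} \oplus \bigoplus_{\alpha \in R^+\setminus S^+}(\mathfrak{g}_\alpha \oplus \mathfrak{g}_{-\alpha})$, where the roots in $R^+ \setminus S^+$ are all higher than those in $S^+$ in a chosen ordering. Define $\mathfrak{m}^+ \subset (\mathfrak{m}\oplus\mathbb{R}^p)\otimes\mathbb{C}$ as the span of the root vectors $E_\alpha$, $\alpha \in R^+\setminus S^+$, together with $E_j = H_j - i\partial_j$, and $\mathfrak{m}^-$ as the span of $E_{-\alpha}$ and $\overline{E}_j = H_j + i\partial_j$. Then $[\mathfrak{k}, \mathfrak{m}^+] \subset \mathfrak{m}^+$, $[\mathfrak{k}, \mathfrak{m}^-] \subset \mathfrak{m}^-$, $[\mathfrak{m}^+, \mathfrak{m}^+] \subset \mathfrak{m}^+$, and $[\mathfrak{m}^-,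 \mathfrak{m}^-] \subset \mathfrak{m}^-$ (brackets taken modulo $\mathfrak{k}\otimes\mathbb{C}$ where appropriate, with $\mathbb{R}^p$ central). -/
open scoped BigOperators

theorem span_bil {M : Type*} [AddCommGroup M] [Module ℂ M]
    (B : M →ₗ[ℂ] M →ₗ[ℂ] M) (s t : Set M) (T : Submodule ℂ M)
    (h : ∀ x ∈ s, ∀ y ∈ t, B x y ∈ T) :
    ∀ x ∈ Submodule.span ℂ s, ∀ y ∈ Submodule.span ℂ t, B x y ∈ T := by
  intro x hx y hy
  have h1 : x ∈ T.comap (B.flip y) := by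
    refine Submodule.span_le.2 (fun z hz => ?_) hx
    have h2 : Submodule.span ℂ t ≤ T.comap (B z) :=
      Submodule.span_le.2 (fun w hw => h z hz w hw)
    exact h2 hy
  exact h1

/-- Let `g` be a (compact simple, complexified) Lie algebra with
Cartan elements `H_1, …, H_r`, positive roots `R`, root vectors `E_α`, and a
subalgebra `k` of lower rank spanned by `H_{p+1}, …, H_r` and the root spaces of
`S ⊆ R`, such that the roots in `R ∖ S` are all higher than those in `S` for an
additive positive height function.  Extend by a central `ℂ^p` (the `∂_j`
directions, bracket `Br (x,u) (y,v) = (⁅x,y⁆, 0)`), and let `mp` be the span of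
the `E_α` (`α ∈ R∖S`) together with `E_j = H_j - i ∂_j`, and `mm` the span of
the `E_{-α}` and `H_j + i ∂_j`.  Then `[k, mp] ⊂ mp`, `[k, mm] ⊂ mm`,
`[mp, mp] ⊂ mp` and `[mm, mm] ⊂ mm`, with brackets taken modulo `k ⊗ ℂ`
(i.e. inside `m^± ⊔ k`). -/
theorem coset_complex_structure_bracket_closure
    (r p : ℕ) (hp : p ≤ r) (hp1 : 1 ≤ p)
    {L : Type*} [LieRing L] [LieAlgebra ℂ L]
    (H : Fin r → L)
    (R S : Finset (Fin r → ℂ)) (hS : S ⊆ R) (h0 : (0 : Fin r → ℂ) ∉ R)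
    (E : (Fin r → ℂ) → L) (N : (Fin r → ℂ) → (Fin r → ℂ) → ℂ)
    -- root space relations
    (hHE : ∀ α : Fin r → ℂ, (α ∈ R ∨ -α ∈ R) → ∀ j, ⁅H j, E α⁆ = α j • E α)
    (hHH : ∀ i j, ⁅H i, H j⁆ = 0)
    (hEEroot : ∀ α β : Fin r → ℂ, (α ∈ R ∨ -α ∈ R) → (β ∈ R ∨ -β ∈ R) →
      (α + β ∈ R ∨ -(α + β) ∈ R) → ⁅E α, E β⁆ = N α β • E (α + β))
    (hEEcartan : ∀ α : Fin r → ℂ, (α ∈ R ∨ -α ∈ R) →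
      ⁅E α, E (-α)⁆ = ∑ j, (2 * α j) • H j)
    (hEEzero : ∀ α β : Fin r → ℂ, (α ∈ R ∨ -α ∈ R) → (β ∈ R ∨ -β ∈ R) →
      ¬(α + β ∈ R ∨ -(α + β) ∈ R) → α + β ≠ 0 → ⁅E α, E β⁆ = 0)
    -- the ordering: roots in R ∖ S are higher than those in S
    (f : (Fin r → ℂ) → ℝ)
    (hfadd : ∀ x y, f (x + y) = f x + f y)
    (hfpos : ∀ α ∈ R, 0 < f α)
    (hhigher : ∀ α ∈ R, α ∉ S → ∀ β ∈ S, f β < f α) :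
    -- the subalgebra k ⊗ ℂ (inside L × ℂ^p with central second factor)
    ∀ k' mp mm : Submodule ℂ (L × (Fin p → ℂ)),
    k' = Submodule.span ℂ
        ({x | ∃ j : Fin r, p ≤ (j : ℕ) ∧ x = (H j, 0)}
          ∪ {x | ∃ α ∈ S, x = (E α, (0 : Fin p → ℂ)) ∨ x = (E (-α), 0)}) →
    mp = Submodule.span ℂ
        ({x | ∃ α ∈ R, α ∉ S ∧ x = (E α, (0 : Fin p → ℂ))}
          ∪ {x | ∃ j : Fin p, x = (H (Fin.castLE hp j), -Complex.I • (Pi.single j 1 : Fin p → ℂ))}) →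
    mm = Submodule.span ℂ
        ({x | ∃ α ∈ R, α ∉ S ∧ x = (E (-α), (0 : Fin p → ℂ))}
          ∪ {x | ∃ j : Fin p, x = (H (Fin.castLE hp j), Complex.I • (Pi.single j 1 : Fin p → ℂ))}) →
    ∀ Br : (L × (Fin p → ℂ)) → (L × (Fin p → ℂ)) → L × (Fin p → ℂ),
    (Br = fun x y => (⁅x.1, y.1⁆, 0)) →
      (∀ x ∈ k', ∀ y ∈ mp, Br x y ∈ mp ⊔ k') ∧
      (∀ x ∈ k', ∀ y ∈ mm, Br x y ∈ mm ⊔ k') ∧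
      (∀ x ∈ mp, ∀ y ∈ mp, Br x y ∈ mp ⊔ k') ∧
      (∀ x ∈ mm, ∀ y ∈ mm, Br x y ∈ mm ⊔ k') := by
  intro k' mp mm hk hmp hmm Br hBr
  subst hBr
  -- basic facts about f
  have hf0 : f 0 = 0 := by have h := hfadd 0 0; simp at h; linarith
  have hfneg : ∀ x, f (-x) = - f x := by
    intro x; have h := hfadd x (-x); rw [add_neg_cancel, hf0] at h; linarith
  have hnegmem : ∀ γ, γ ∈ R → (-γ ∈ R ∨ -(-γ) ∈ R) := fun γ h => Or.inr (by simpa using h)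
  have hsum_ne : ∀ α ∈ R, ∀ β ∈ R, α + β ≠ 0 := by
    intro α hα β hβ h
    have h1 := congrArg f h
    rw [hfadd, hf0] at h1
    have := hfpos α hα; have := hfpos β hβ; linarith
  -- the bilinear bracket
  set B : (L × (Fin p → ℂ)) →ₗ[ℂ] (L × (Fin p → ℂ)) →ₗ[ℂ] (L × (Fin p → ℂ)) :=
    LinearMap.mk₂ ℂ (fun x y => (⁅x.1, y.1⁆, 0))
      (by intros; simp [Prod.ext_iff, add_lie])
      (by intros; simp [Prod.ext_iff, smul_lie])
      (by intros; simp [Prod.ext_iff, lie_add])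
      (by intros; simp [Prod.ext_iff, lie_smul]) with hB
  have hBapp : ∀ x y : L × (Fin p → ℂ), B x y = (⁅x.1, y.1⁆, 0) := by
    intro x y; rw [hB]; rfl
  have smul_pair : ∀ (c : ℂ) (x : L),
      ((c • x : L), (0 : Fin p → ℂ)) = c • ((x, 0) : L × (Fin p → ℂ)) := by
    intro c x; simp
  -- membership helpers
  have hEα_mp : ∀ α, α ∈ R → α ∉ S → ((E α, (0 : Fin p → ℂ)) : L × (Fin p → ℂ)) ∈ mp := by
    intro α h1 h2; rw [hmp]; exact Submodule.subset_span (Or.inl ⟨α, h1, h2, rfl⟩)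
  have hEα_mm : ∀ α, α ∈ R → α ∉ S → ((E (-α), (0 : Fin p → ℂ)) : L × (Fin p → ℂ)) ∈ mm := by
    intro α h1 h2; rw [hmm]; exact Submodule.subset_span (Or.inl ⟨α, h1, h2, rfl⟩)
  have hEs_k : ∀ s, s ∈ S → ((E s, (0 : Fin p → ℂ)) : L × (Fin p → ℂ)) ∈ k' := by
    intro s hs; rw [hk]; exact Submodule.subset_span (Or.inr ⟨s, hs, Or.inl rfl⟩)
  have hEns_k : ∀ s, s ∈ S → ((E (-s), (0 : Fin p → ℂ)) : L × (Fin p → ℂ)) ∈ k' := by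
    intro s hs; rw [hk]; exact Submodule.subset_span (Or.inr ⟨s, hs, Or.inr rfl⟩)
  have hEmemp : ∀ γ, γ ∈ R → ((E γ, (0 : Fin p → ℂ)) : L × (Fin p → ℂ)) ∈ mp ⊔ k' := by
    intro γ hγ
    by_cases h : γ ∈ S
    · exact Submodule.mem_sup_right (hEs_k γ h)
    · exact Submodule.mem_sup_left (hEα_mp γ hγ h)
  have hEmemm : ∀ γ, γ ∈ R → ((E (-γ), (0 : Fin p → ℂ)) : L × (Fin p → ℂ)) ∈ mm ⊔ k' := by
    intro γ hγ
    by_cases h : γ ∈ S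
    · exact Submodule.mem_sup_right (hEns_k γ h)
    · exact Submodule.mem_sup_left (hEα_mm γ hγ h)
  -- bracket of two root vectors
  have bracketEE : ∀ (γ δ : Fin r → ℂ), (γ ∈ R ∨ -γ ∈ R) → (δ ∈ R ∨ -δ ∈ R) → γ + δ ≠ 0 →
      ∀ T : Submodule ℂ (L × (Fin p → ℂ)),
      ((γ + δ ∈ R ∨ -(γ + δ) ∈ R) → ((E (γ + δ), (0 : Fin p → ℂ)) : L × (Fin p → ℂ)) ∈ T) →
      (((⁅E γ, E δ⁆ : L), (0 : Fin p → ℂ)) : L × (Fin p → ℂ)) ∈ T := by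
    intro γ δ hγ hδ hne T hT
    by_cases hr : γ + δ ∈ R ∨ -(γ + δ) ∈ R
    · rw [hEEroot γ δ hγ hδ hr, smul_pair]
      exact T.smul_mem _ (hT hr)
    · rw [hEEzero γ δ hγ hδ hr hne]
      exact T.zero_mem
  have hEH : ∀ γ, (γ ∈ R ∨ -γ ∈ R) → ∀ j, (⁅E γ, H j⁆ : L) = (-(γ j)) • E γ := by
    intro γ hγ j
    rw [← lie_skew, hHE γ hγ j, neg_smul]
  refine ⟨?_, ?_, ?_, ?_⟩
  · -- [k', mp] ⊆ mp ⊔ k'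
    intro x hx y hy
    refine span_bil B _ _ (mp ⊔ k') ?_ x (hk ▸ hx) y (hmp ▸ hy)
    rintro x (⟨j, hj, rfl⟩ | ⟨s, hs, (rfl | rfl)⟩) y (⟨α, hα, hαS, rfl⟩ | ⟨j', rfl⟩) <;>
      rw [hBapp]
    · -- H j, E α
      simp only
      rw [hHE α (Or.inl hα) j, smul_pair]
      exact Submodule.smul_mem _ _ (Submodule.mem_sup_left (hEα_mp α hα hαS))
    · -- H j, v
      simp only
      rw [hHH]
      exact Submodule.zero_mem _
    · -- E s, E α
      exact bracketEE s α (Or.inl (hS hs)) (Or.inl hα) (hsum_ne s (hS hs) α hα) _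
        (fun hr => hEmemp _ (by
          rcases hr with hr | hr
          · exact hr
          · exfalso
            have h1 := hfpos _ hr
            rw [hfneg, hfadd] at h1
            have := hfpos s (hS hs); have := hfpos α hα; linarith))
    · -- E s, v
      simp only
      rw [hEH s (Or.inl (hS hs)) _, smul_pair]
      exact Submodule.smul_mem _ _ (Submodule.mem_sup_right (hEs_k s hs))
    · -- E (-s), E α
      refine bracketEE (-s) α (hnegmem s (hS hs)) (Or.inl hα) ?_ _ ?_
      · intro h
        exact hαS ((neg_add_eq_zero.mp h) ▸ hs)
      · intro hr
        rcases hr with hr | hr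
        · exact hEmemp _ hr
        · exfalso
          have h1 := hfpos _ hr
          rw [hfneg, hfadd, hfneg] at h1
          have h2 := hhigher α hα hαS s hs
          linarith
    · -- E (-s), v
      simp only
      rw [hEH (-s) (hnegmem s (hS hs)) _, smul_pair]
      exact Submodule.smul_mem _ _ (Submodule.mem_sup_right (hEns_k s hs))
  · -- [k', mm] ⊆ mm ⊔ k'
    intro x hx y hy
    refine span_bil B _ _ (mm ⊔ k') ?_ x (hk ▸ hx) y (hmm ▸ hy)
    rintro x (⟨j, hj, rfl⟩ | ⟨s, hs, (rfl | rfl)⟩) y (⟨α, hα, hαS, rfl⟩ | ⟨j', rfl⟩) <;>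
      rw [hBapp]
    · -- H j, E (-α)
      simp only
      rw [hHE (-α) (hnegmem α hα) j, smul_pair]
      exact Submodule.smul_mem _ _ (Submodule.mem_sup_left (hEα_mm α hα hαS))
    · simp only
      rw [hHH]
      exact Submodule.zero_mem _
    · -- E s, E (-α)
      refine bracketEE s (-α) (Or.inl (hS hs)) (hnegmem α hα) ?_ _ ?_
      · intro h
        exact hαS ((add_neg_eq_zero.mp h) ▸ hs)
      · intro hr
        have e : s + -α = -(α - s) := by abel
        rw [e] at hr ⊢
        rcases hr with hr | hr
        · exfalso
          have h1 := hfpos _ hr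
          rw [hfneg] at h1
          have h2 : f (α - s) = f α - f s := by
            have := hfadd (α - s) s
            simp at this
            linarith
          have h3 := hhigher α hα hαS s hs
          linarith
        · rw [neg_neg] at hr
          exact hEmemm _ hr
    · -- E s, w
      simp only
      rw [hEH s (Or.inl (hS hs)) _, smul_pair]
      exact Submodule.smul_mem _ _ (Submodule.mem_sup_right (hEs_k s hs))
    · -- E (-s), E (-α)
      refine bracketEE (-s) (-α) (hnegmem s (hS hs)) (hnegmem α hα) ?_ _ ?_
      · intro h
        have h1 := congrArg f h
        rw [hfadd, hfneg, hfneg, hf0] at h1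
        have := hfpos s (hS hs); have := hfpos α hα; linarith
      · intro hr
        have e : -s + -α = -(s + α) := by abel
        rw [e] at hr ⊢
        rcases hr with hr | hr
        · exfalso
          have h1 := hfpos _ hr
          rw [hfneg, hfadd] at h1
          have := hfpos s (hS hs); have := hfpos α hα; linarith
        · rw [neg_neg] at hr
          exact hEmemm _ hr
    · -- E (-s), w
      simp only
      rw [hEH (-s) (hnegmem s (hS hs)) _, smul_pair]
      exact Submodule.smul_mem _ _ (Submodule.mem_sup_right (hEns_k s hs))
  · -- [mp, mp] ⊆ mp ⊔ k'
    intro x hx y hy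
    refine span_bil B _ _ (mp ⊔ k') ?_ x (hmp ▸ hx) y (hmp ▸ hy)
    rintro x (⟨α, hα, hαS, rfl⟩ | ⟨j, rfl⟩) y (⟨β, hβ, hβS, rfl⟩ | ⟨j', rfl⟩) <;>
      rw [hBapp]
    · -- E α, E β
      refine bracketEE α β (Or.inl hα) (Or.inl hβ) (hsum_ne α hα β hβ) _ ?_
      intro hr
      rcases hr with hr | hr
      · exact hEmemp _ hr
      · exfalso
        have h1 := hfpos _ hr
        rw [hfneg, hfadd] at h1
        have := hfpos α hα; have := hfpos β hβ; linarith
    · -- E α, v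
      simp only
      rw [hEH α (Or.inl hα) _, smul_pair]
      exact Submodule.smul_mem _ _ (Submodule.mem_sup_left (hEα_mp α hα hαS))
    · -- v, E β
      simp only
      rw [hHE β (Or.inl hβ) _, smul_pair]
      exact Submodule.smul_mem _ _ (Submodule.mem_sup_left (hEα_mp β hβ hβS))
    · simp only
      rw [hHH]
      exact Submodule.zero_mem _
  · -- [mm, mm] ⊆ mm ⊔ k'
    intro x hx y hy
    refine span_bil B _ _ (mm ⊔ k') ?_ x (hmm ▸ hx) y (hmm ▸ hy)
    rintro x (⟨α, hα, hαS, rfl⟩ | ⟨j, rfl⟩) y (⟨β, hβ, hβS, rfl⟩ | ⟨j', rfl⟩) <;>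
      rw [hBapp]
    · -- E (-α), E (-β)
      refine bracketEE (-α) (-β) (hnegmem α hα) (hnegmem β hβ) ?_ _ ?_
      · intro h
        have h1 := congrArg f h
        rw [hfadd, hfneg, hfneg, hf0] at h1
        have := hfpos α hα; have := hfpos β hβ; linarith
      · intro hr
        have e : -α + -β = -(α + β) := by abel
        rw [e] at hr ⊢
        rcases hr with hr | hr
        · exfalso
          have h1 := hfpos _ hr
          rw [hfneg, hfadd] at h1
          have := hfpos α hα; have := hfpos β hβ; linarith
        · rw [neg_neg] at hr
          exact hEmemm _ hr
    · -- E (-α), w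
      simp only
      rw [hEH (-α) (hnegmem α hα) _, smul_pair]
      exact Submodule.smul_mem _ _ (Submodule.mem_sup_left (hEα_mm α hα hαS))
    · -- w, E (-β)
      simp only
      rw [hHE (-β) (hnegmem β hβ) _, smul_pair]
      exact Submodule.smul_mem _ _ (Submodule.mem_sup_left (hEα_mm β hβ hβS))
    · simp only
      rw [hHH]
      exact Submodule.zero_mem _
end
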